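/- Let p : ℝⁿ → ℝ be differentiable with p(x) = h(⟨ξ, x⟩) for some nonzero ξ ∈ ℝⁿ and a univariate polynomial h whose derivative h' has no real roots. Then p is pseudoconvex: for all x, y ∈ ℝⁿ, ⟨∇p(x), y − x⟩ ≥ 0 implies p(y) ≥ p(x). -/

import Mathlib

lemma sign_const_of_no_root (q : Polynomial ℝ) (hq : ∀ t, q.eval t ≠ 0) :
    (∀ t, 0 < q.eval t) ∨ (∀ t, q.eval t < 0) := by
  by_cases h0 : 0 < q.eval 0
  · left
    intro t
    by_contra hle
    push_neg at hle
    have hlt : q.eval t < 0 := lt_of_le_of_ne hle (hq t)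
    have hmem : (0:ℝ) ∈ Set.uIcc (q.eval 0) (q.eval t) := by
      rw [Set.mem_uIcc]; right; constructor <;> linarith
    obtain ⟨c, _, hc⟩ := intermediate_value_uIcc
      (q.continuous_aeval.continuousOn (s := Set.uIcc 0 t)) hmem
    exact hq c hc
  · right
    push_neg at h0
    have h0' : q.eval 0 < 0 := lt_of_le_of_ne h0 (hq 0)
    intro t
    by_contra hle
    push_neg at hle
    have hlt : 0 < q.eval t := lt_of_le_of_ne hle (Ne.symm (hq t))
    have hmem : (0:ℝ) ∈ Set.uIcc (q.eval 0) (q.eval t) := by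
      rw [Set.mem_uIcc]; left; constructor <;> linarith
    obtain ⟨c, _, hc⟩ := intermediate_value_uIcc
      (q.continuous_aeval.continuousOn (s := Set.uIcc 0 t)) hmem
    exact hq c hc

theorem stmt_19 (n : ℕ) (ξ : EuclideanSpace ℝ (Fin n)) (hξ : ξ ≠ 0)
    (h : Polynomial ℝ) (hder : ∀ t : ℝ, (Polynomial.derivative h).eval t ≠ 0)
    (p : EuclideanSpace ℝ (Fin n) → ℝ) (hdiff : Differentiable ℝ p)
    (hp : ∀ x, p x = h.eval (inner ℝ ξ x : ℝ)) :
    ∀ x y : EuclideanSpace ℝ (Fin n),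
      (0 : ℝ) ≤ inner ℝ (gradient p x) (y - x) → p x ≤ p y := by
  intro x y hxy
  set s : ℝ := inner ℝ ξ x with hs
  set t : ℝ := inner ℝ ξ y with ht
  -- gradient computation
  have hgrad : HasGradientAt p (((Polynomial.derivative h).eval s) • ξ) x := by
    rw [hasGradientAt_iff_hasFDerivAt]
    have hf : HasFDerivAt (fun z : EuclideanSpace ℝ (Fin n) => (inner ℝ ξ z : ℝ))
        (innerSL ℝ ξ) x := (innerSL ℝ ξ).hasFDerivAt
    have hd : HasDerivAt (fun u : ℝ => h.eval u) ((Polynomial.derivative h).eval s) s :=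
      h.hasDerivAt s
    have hcomp := hd.comp_hasFDerivAt x hf
    have hEq : (InnerProductSpace.toDual ℝ (EuclideanSpace ℝ (Fin n)))
        (((Polynomial.derivative h).eval s) • ξ)
        = ((Polynomial.derivative h).eval s) • innerSL ℝ ξ := by
      ext v
      simp [InnerProductSpace.toDual_apply_apply, real_inner_smul_left]
    rw [hEq]
    have : p = (fun u : ℝ => h.eval u) ∘ (fun z : EuclideanSpace ℝ (Fin n) => (inner ℝ ξ z : ℝ)) := by
      funext z; simp [hp z]
    rw [this]
    exact hcomp
  have hgx : gradient p x = ((Polynomial.derivative h).eval s) • ξ := hgrad.gradient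
  have hinner : (inner ℝ (gradient p x) (y - x) : ℝ)
      = ((Polynomial.derivative h).eval s) * (t - s) := by
    rw [hgx, real_inner_smul_left, inner_sub_right]
  rw [hinner] at hxy
  rw [hp x, hp y, ← hs, ← ht]
  rcases sign_const_of_no_root (Polynomial.derivative h) hder with hpos | hneg
  · have hmono : StrictMono (fun u : ℝ => h.eval u) :=
      strictMono_of_deriv_pos (by
        intro u
        rw [Polynomial.deriv]
        exact hpos u)
    have hst : s ≤ t := by nlinarith [hpos s]
    exact hmono.monotone hst
  · have hmono : StrictAnti (fun u : ℝ => h.eval u) :=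
      strictAnti_of_deriv_neg (by
        intro u
        rw [Polynomial.deriv]
        exact hneg u)
    have hst : t ≤ s := by nlinarith [hneg s]
    exact hmono.antitone hst
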